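/- Let G be a locally finite simple graph, x ∈ V(G), and f a real function with f(x) = 0. Then 2Γ₂(f)(x) = (1/2) Σ_{u∈B(2,x)} Σ_{v∈B(1,u)∩B(1,x)} (f(u)-2f(v))² + (Σ_{v∈B(1,x)} f(v))² + Σ_{{v,v'}∈E(G), v,v'∈B(1,x)} (2(f(v)-f(v'))² + (1/2)(f(v)²+f(v')²)) + Σ_{v∈B(1,x)} ((4-d(x)-d(v))/2) f(v)². -/

import Mathlib

open Finset Real

namespace RicciPaper

variable {V : Type*} [DecidableEq V] (G : SimpleGraph V) [∀ v : V, Fintype (G.neighborSet v)]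

/-- The graph Laplacian operator `Δ`. -/
noncomputable def lap (f : V → ℝ) (x : V) : ℝ :=
  ∑ v ∈ G.neighborFinset x, (f v - f x)

/-- The operator `Γ`. -/
noncomputable def gam (f g : V → ℝ) (x : V) : ℝ :=
  (1 / 2) * ∑ v ∈ G.neighborFinset x, (f x - f v) * (g x - g v)

/-- The operator `Γ₂`. -/
noncomputable def gam2 (f : V → ℝ) (x : V) : ℝ :=
  (1 / 2) * lap G (fun y => gam G f f y) x - gam G f (lap G f) x

/-- The local discrete Ricci curvature at `x`: the largest `K ∈ ℝ ∪ {-∞}` with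
`Γ₂(f)(x) ≥ K Γ(f,f)(x)` for all `f`. -/
noncomputable def ricLoc (x : V) : EReal :=
  sSup {K : EReal | ∃ k : ℝ, K = (k : EReal) ∧ ∀ f : V → ℝ, k * gam G f f x ≤ gam2 G f x}

/-- The discrete Ricci curvature of `G`. -/
noncomputable def ric : EReal :=
  sSup {K : EReal | ∃ k : ℝ, K = (k : EReal) ∧
    ∀ (x : V) (f : V → ℝ), k * gam G f f x ≤ gam2 G f x}

/-- The set `B(2,x)` of vertices at distance exactly 2 from `x`, as a finset. -/
noncomputable def sphere2 (x : V) : Finset V :=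
  ((G.neighborFinset x).biUnion fun v => G.neighborFinset v).filter fun u => G.dist x u = 2


lemma neighbor_partition (x v : V) (hv : v ∈ G.neighborFinset x) :
    G.neighborFinset v =
      insert x ((G.neighborFinset v ∩ G.neighborFinset x) ∪
        (G.neighborFinset v ∩ sphere2 G x)) := by
  have hxv : G.Adj x v := by rwa [SimpleGraph.mem_neighborFinset] at hv
  ext w
  simp only [Finset.mem_insert, Finset.mem_union, Finset.mem_inter,
    SimpleGraph.mem_neighborFinset]
  constructor
  · intro hvw
    by_cases hwx : w = x
    · exact Or.inl hwx
    by_cases hxw : G.Adj x w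
    · exact Or.inr (Or.inl ⟨hvw, hxw⟩)
    · refine Or.inr (Or.inr ⟨hvw, ?_⟩)
      simp only [sphere2, Finset.mem_filter, Finset.mem_biUnion,
        SimpleGraph.mem_neighborFinset]
      refine ⟨⟨v, hxv, hvw⟩, ?_⟩
      have h2 : G.dist x w ≤ 2 := by
        have := SimpleGraph.dist_le
          (SimpleGraph.Walk.cons hxv (SimpleGraph.Walk.cons hvw SimpleGraph.Walk.nil))
        simpa using this
      have h0 : G.dist x w ≠ 0 := by
        intro h
        rcases SimpleGraph.dist_eq_zero_iff_eq_or_not_reachable.mp h with h' | h'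
        · exact hwx h'.symm
        · exact h' ⟨SimpleGraph.Walk.cons hxv (SimpleGraph.Walk.cons hvw SimpleGraph.Walk.nil)⟩
      have h1 : G.dist x w ≠ 1 := fun h => hxw (SimpleGraph.dist_eq_one_iff_adj.mp h)
      omega
  · rintro (rfl | ⟨hvw, _⟩ | ⟨hvw, _⟩)
    · exact hxv.symm
    · exact hvw
    · exact hvw

lemma x_not_mem_parts (x v : V) :
    x ∉ (G.neighborFinset v ∩ G.neighborFinset x) ∪ (G.neighborFinset v ∩ sphere2 G x) := by
  simp only [Finset.mem_union, Finset.mem_inter, SimpleGraph.mem_neighborFinset,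
    sphere2, Finset.mem_filter]
  rintro (⟨_, h⟩ | ⟨_, _, h⟩)
  · exact G.irrefl h
  · rw [SimpleGraph.dist_self] at h; omega

lemma disj_parts (x v : V) :
    Disjoint (G.neighborFinset v ∩ G.neighborFinset x)
      (G.neighborFinset v ∩ sphere2 G x) := by
  rw [Finset.disjoint_left]
  intro w hw1 hw2
  simp only [Finset.mem_inter, SimpleGraph.mem_neighborFinset, sphere2,
    Finset.mem_filter] at hw1 hw2
  have h1 : G.dist x w = 1 := SimpleGraph.dist_eq_one_iff_adj.mpr hw1.2
  have h2 : G.dist x w = 2 := hw2.2.2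
  omega

lemma sum_neighbor_split (x v : V) (hv : v ∈ G.neighborFinset x) (h : V → ℝ) :
    ∑ w ∈ G.neighborFinset v, h w =
      h x + ∑ w ∈ G.neighborFinset v ∩ G.neighborFinset x, h w
          + ∑ w ∈ G.neighborFinset v ∩ sphere2 G x, h w := by
  conv_lhs => rw [neighbor_partition G x v hv]
  rw [Finset.sum_insert (x_not_mem_parts G x v), Finset.sum_union (disj_parts G x v), add_assoc]

lemma card_neighbor_split (x v : V) (hv : v ∈ G.neighborFinset x) :
    (G.degree v : ℝ) = 1 + ((G.neighborFinset v ∩ G.neighborFinset x).card : ℝ)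
      + ((G.neighborFinset v ∩ sphere2 G x).card : ℝ) := by
  have := sum_neighbor_split G x v hv (fun _ => (1 : ℝ))
  simpa [Finset.sum_const, ← SimpleGraph.card_neighborFinset_eq_degree] using this

lemma swap_NS (x : V) (g : V → V → ℝ) :
    ∑ v ∈ G.neighborFinset x, ∑ u ∈ G.neighborFinset v ∩ sphere2 G x, g v u =
    ∑ u ∈ sphere2 G x, ∑ v ∈ G.neighborFinset u ∩ G.neighborFinset x, g v u := by
  apply Finset.sum_comm'
  intro v u
  simp only [Finset.mem_inter, SimpleGraph.mem_neighborFinset]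
  constructor
  · rintro ⟨h1, h2, h3⟩; exact ⟨⟨h2.symm, h1⟩, h3⟩
  · rintro ⟨⟨h1, h2⟩, h3⟩; exact ⟨h2, h1.symm, h3⟩

lemma swap_NN (x : V) (g : V → V → ℝ) :
    ∑ v ∈ G.neighborFinset x, ∑ w ∈ G.neighborFinset v ∩ G.neighborFinset x, g v w =
    ∑ w ∈ G.neighborFinset x, ∑ v ∈ G.neighborFinset w ∩ G.neighborFinset x, g v w := by
  apply Finset.sum_comm'
  intro v w
  simp only [Finset.mem_inter, SimpleGraph.mem_neighborFinset]
  constructor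
  · rintro ⟨h1, h2, h3⟩; exact ⟨⟨h2.symm, h1⟩, h3⟩
  · rintro ⟨⟨h1, h2⟩, h3⟩; exact ⟨h2, h1.symm, h3⟩


variable [DecidableRel G.Adj]

/-- the explicit formula for 2*Gamma2(f)(x) when f(x) = 0. -/
theorem two_gam2_eq (x : V) (f : V → ℝ) (hf : f x = 0) :
    2 * gam2 G f x =
      (1 / 2) * ∑ u ∈ sphere2 G x, ∑ v ∈ G.neighborFinset u ∩ G.neighborFinset x,
          (f u - 2 * f v) ^ 2
      + (∑ v ∈ G.neighborFinset x, f v) ^ 2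
      + (1 / 2) * ∑ v ∈ G.neighborFinset x, ∑ v' ∈ G.neighborFinset x,
          (if G.Adj v v' then 2 * (f v - f v') ^ 2 + (1 / 2) * ((f v) ^ 2 + (f v') ^ 2) else 0)
      + ∑ v ∈ G.neighborFinset x, ((4 - (G.degree x : ℝ) - (G.degree v : ℝ)) / 2) * (f v) ^ 2 := by
  classical
  set N := G.neighborFinset x with hN
  have hS : lap G f x = ∑ v ∈ N, f v := by
    simp [lap, hf, hN]
  have hlapgam : lap G (fun y => gam G f f y) x
      = (∑ v ∈ N, gam G f f v) - (N.card : ℝ) * gam G f f x := by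
    simp only [lap]
    rw [Finset.sum_sub_distrib, Finset.sum_const, nsmul_eq_mul]
  have hgamlap : gam G f (lap G f) x
      = (1 / 2) * ((∑ v ∈ N, f v * lap G f v) - (∑ v ∈ N, f v) * (∑ v ∈ N, f v)) := by
    rw [gam]
    congr 1
    rw [Finset.sum_mul, ← Finset.sum_sub_distrib]
    apply Finset.sum_congr rfl
    intro v _
    rw [hf, hS]
    ring
  have hgamx : gam G f f x = (1 / 2) * ∑ v ∈ N, f v ^ 2 := by
    rw [gam]
    congr 1
    apply Finset.sum_congr rfl
    intro v _
    rw [hf]; ring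
  have hper : ∀ v ∈ N, gam G f f v - f v * lap G f v
      = ∑ w ∈ G.neighborFinset v,
          ((3 / 2) * f v ^ 2 - 2 * f v * f w + (1 / 2) * f w ^ 2) := by
    intro v _
    rw [gam, lap, Finset.mul_sum, Finset.mul_sum, ← Finset.sum_sub_distrib]
    apply Finset.sum_congr rfl
    intro w _
    ring
  have hdeg : (G.degree x : ℝ) = (N.card : ℝ) := by
    rw [hN, SimpleGraph.card_neighborFinset_eq_degree]
  have hcomb : (∑ v ∈ N, gam G f f v) - (∑ v ∈ N, f v * lap G f v)
      = ∑ v ∈ N, ∑ w ∈ G.neighborFinset v,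
          ((3 / 2) * f v ^ 2 - 2 * f v * f w + (1 / 2) * f w ^ 2) := by
    rw [← Finset.sum_sub_distrib]
    exact Finset.sum_congr rfl hper
  have L1 : 2 * gam2 G f x
      = (∑ v ∈ N, ∑ w ∈ G.neighborFinset v,
          ((3 / 2) * f v ^ 2 - 2 * f v * f w + (1 / 2) * f w ^ 2))
        + (∑ v ∈ N, f v) ^ 2 - ((G.degree x : ℝ) / 2) * ∑ v ∈ N, f v ^ 2 := by
    rw [gam2, hlapgam, hgamlap, hgamx, hdeg]
    linear_combination hcomb
  -- split each neighborhood sum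
  have hsplit : ∑ v ∈ N, ∑ w ∈ G.neighborFinset v,
        ((3 / 2) * f v ^ 2 - 2 * f v * f w + (1 / 2) * f w ^ 2)
      = ∑ v ∈ N, ((3 / 2) * f v ^ 2
          + ∑ w ∈ G.neighborFinset v ∩ N,
              ((3 / 2) * f v ^ 2 - 2 * f v * f w + (1 / 2) * f w ^ 2)
          + ∑ w ∈ G.neighborFinset v ∩ sphere2 G x,
              ((3 / 2) * f v ^ 2 - 2 * f v * f w + (1 / 2) * f w ^ 2)) := by
    apply Finset.sum_congr rfl
    intro v hv
    rw [sum_neighbor_split G x v hv, hf]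
    ring
  -- the sphere-2 part
  have hB : ∑ v ∈ N, ∑ w ∈ G.neighborFinset v ∩ sphere2 G x,
        ((3 / 2) * f v ^ 2 - 2 * f v * f w + (1 / 2) * f w ^ 2)
      = (1 / 2) * (∑ u ∈ sphere2 G x, ∑ v ∈ G.neighborFinset u ∩ N, (f u - 2 * f v) ^ 2)
        - (1 / 2) * ∑ v ∈ N, ((G.neighborFinset v ∩ sphere2 G x).card : ℝ) * f v ^ 2 := by
    have e1 : ∑ v ∈ N, ∑ w ∈ G.neighborFinset v ∩ sphere2 G x,
          ((3 / 2) * f v ^ 2 - 2 * f v * f w + (1 / 2) * f w ^ 2)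
        = ∑ v ∈ N, ∑ w ∈ G.neighborFinset v ∩ sphere2 G x,
            ((1 / 2) * (f w - 2 * f v) ^ 2 - (1 / 2) * f v ^ 2) := by
      apply Finset.sum_congr rfl; intro v _
      apply Finset.sum_congr rfl; intro w _
      ring
    have e2 : ∑ v ∈ N, ∑ w ∈ G.neighborFinset v ∩ sphere2 G x,
          (1 / 2) * (f w - 2 * f v) ^ 2
        = (1 / 2) * ∑ u ∈ sphere2 G x, ∑ v ∈ G.neighborFinset u ∩ N, (f u - 2 * f v) ^ 2 := by
      rw [swap_NS G x (fun v w => (1 / 2) * (f w - 2 * f v) ^ 2), Finset.mul_sum]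
      apply Finset.sum_congr rfl; intro u _
      rw [Finset.mul_sum]
    have e3 : ∀ v ∈ N, ∑ w ∈ G.neighborFinset v ∩ sphere2 G x, (1 / 2) * f v ^ 2
        = (1 / 2) * (((G.neighborFinset v ∩ sphere2 G x).card : ℝ) * f v ^ 2) := by
      intro v _
      rw [Finset.sum_const, nsmul_eq_mul]
      ring
    rw [e1, Finset.sum_congr rfl (fun v hv => Finset.sum_sub_distrib _ _),
      Finset.sum_sub_distrib, e2, Finset.sum_congr rfl e3, ← Finset.mul_sum]
  -- the inner-sphere part
  have hsymA : ∑ v ∈ N, ∑ w ∈ G.neighborFinset v ∩ N, f w ^ 2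
      = ∑ v ∈ N, ((G.neighborFinset v ∩ N).card : ℝ) * f v ^ 2 := by
    rw [hN, swap_NN G x (fun v w => f w ^ 2)]
    apply Finset.sum_congr rfl
    intro w _
    rw [Finset.sum_const, nsmul_eq_mul]
  have hA : ∑ v ∈ N, ∑ w ∈ G.neighborFinset v ∩ N,
        ((3 / 2) * f v ^ 2 - 2 * f v * f w + (1 / 2) * f w ^ 2)
      = (1 / 2) * ∑ v ∈ N, ∑ v' ∈ N,
          (if G.Adj v v' then 2 * (f v - f v') ^ 2 + (1 / 2) * ((f v) ^ 2 + (f v') ^ 2) else 0)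
        - (1 / 2) * ∑ v ∈ N, ((G.neighborFinset v ∩ N).card : ℝ) * f v ^ 2 := by
    have hfilter : ∀ v : V, N.filter (fun v' => G.Adj v v') = G.neighborFinset v ∩ N := by
      intro v
      ext w
      simp only [Finset.mem_filter, Finset.mem_inter, SimpleGraph.mem_neighborFinset]
      tauto
    have eT : (1 / 2) * ∑ v ∈ N, ∑ v' ∈ N,
          (if G.Adj v v' then 2 * (f v - f v') ^ 2 + (1 / 2) * ((f v) ^ 2 + (f v') ^ 2) else 0)
        = ∑ v ∈ N, ∑ w ∈ G.neighborFinset v ∩ N,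
            ((f v - f w) ^ 2 + (1 / 4) * f v ^ 2 + (1 / 4) * f w ^ 2) := by
      rw [Finset.mul_sum]
      apply Finset.sum_congr rfl
      intro v _
      rw [← Finset.sum_filter, hfilter v, Finset.mul_sum]
      apply Finset.sum_congr rfl
      intro w _
      ring
    have ediff : ∑ v ∈ N, ∑ w ∈ G.neighborFinset v ∩ N,
          ((3 / 2) * f v ^ 2 - 2 * f v * f w + (1 / 2) * f w ^ 2)
        - ∑ v ∈ N, ∑ w ∈ G.neighborFinset v ∩ N,
            ((f v - f w) ^ 2 + (1 / 4) * f v ^ 2 + (1 / 4) * f w ^ 2)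
        = ∑ v ∈ N, ∑ w ∈ G.neighborFinset v ∩ N, ((1 / 4) * f v ^ 2 - (3 / 4) * f w ^ 2) := by
      rw [← Finset.sum_sub_distrib]
      apply Finset.sum_congr rfl
      intro v _
      rw [← Finset.sum_sub_distrib]
      apply Finset.sum_congr rfl
      intro w _
      ring
    have esplit : ∑ v ∈ N, ∑ w ∈ G.neighborFinset v ∩ N,
          ((1 / 4) * f v ^ 2 - (3 / 4) * f w ^ 2)
        = (1 / 4) * (∑ v ∈ N, ∑ w ∈ G.neighborFinset v ∩ N, f v ^ 2)
          - (3 / 4) * (∑ v ∈ N, ∑ w ∈ G.neighborFinset v ∩ N, f w ^ 2) := by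
      rw [Finset.mul_sum, Finset.mul_sum, ← Finset.sum_sub_distrib]
      apply Finset.sum_congr rfl
      intro v _
      rw [Finset.mul_sum, Finset.mul_sum, ← Finset.sum_sub_distrib]
    have econst : ∑ v ∈ N, ∑ w ∈ G.neighborFinset v ∩ N, f v ^ 2
        = ∑ v ∈ N, ((G.neighborFinset v ∩ N).card : ℝ) * f v ^ 2 := by
      apply Finset.sum_congr rfl
      intro v _
      rw [Finset.sum_const, nsmul_eq_mul]
    rw [eT]
    linear_combination ediff + esplit + (1/4 : ℝ) * econst - (3/4 : ℝ) * hsymA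
  -- the degree collection
  have h4 : ∑ v ∈ N, (3 / 2) * f v ^ 2
        - (1 / 2) * ∑ v ∈ N, ((G.neighborFinset v ∩ N).card : ℝ) * f v ^ 2
        - (1 / 2) * ∑ v ∈ N, ((G.neighborFinset v ∩ sphere2 G x).card : ℝ) * f v ^ 2
        - ((G.degree x : ℝ) / 2) * ∑ v ∈ N, f v ^ 2
      = ∑ v ∈ N, ((4 - (G.degree x : ℝ) - (G.degree v : ℝ)) / 2) * (f v) ^ 2 := by
    rw [Finset.mul_sum, Finset.mul_sum, Finset.mul_sum,
      ← Finset.sum_sub_distrib, ← Finset.sum_sub_distrib, ← Finset.sum_sub_distrib]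
    apply Finset.sum_congr rfl
    intro v hv
    have hc := card_neighbor_split G x v hv
    linear_combination (f v ^ 2 / 2) * hc
  rw [L1, hsplit, Finset.sum_add_distrib, Finset.sum_add_distrib, hA, hB]
  linarith [h4]


end RicciPaper
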